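/- Riccati recursion preserves positive semidefiniteness: if $V_{t+1} \succeq 0$, $l_{t,ZZ} \succeq 0$, and $R \succ 0$, then $V_t = l_{t,ZZ} + \mathcal{A}_t^T V_{t+1}\mathcal{A}_t - \mathcal{A}_t^T V_{t+1}\mathcal{B}_t(R + \mathcal{B}_t^T V_{t+1}\mathcal{B}_t)^{-1}\mathcal{B}_t^T V_{t+1}\mathcal{A}_t$ is symmetric positive semidefinite. -/

import Mathlib

open Matrix

/-- The Riccati recursion preserves positive semidefiniteness: if
`V_{t+1} ⪰ 0`, `l_{t,ZZ} ⪰ 0` and `R ≻ 0`, then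
`V_t = l_{t,ZZ} + Aᵀ V_{t+1} A - Aᵀ V_{t+1} B (R + Bᵀ V_{t+1} B)⁻¹ Bᵀ V_{t+1} A ⪰ 0`. -/
theorem riccati_update_posSemidef
    (n m : ℕ)
    (V : Matrix (Fin n) (Fin n) ℝ) (lZZ : Matrix (Fin n) (Fin n) ℝ)
    (R : Matrix (Fin m) (Fin m) ℝ)
    (A : Matrix (Fin n) (Fin n) ℝ) (B : Matrix (Fin n) (Fin m) ℝ)
    (hV : V.PosSemidef) (hl : lZZ.PosSemidef) (hR : R.PosDef) :
    (lZZ + Aᵀ * V * A - Aᵀ * V * B * (R + Bᵀ * V * B)⁻¹ * Bᵀ * V * A).PosSemidef := by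
  have hBVB : (Bᵀ * V * B).PosSemidef := by
    simpa [conjTranspose_eq_transpose_of_trivial] using hV.conjTranspose_mul_mul_same B
  have hS : (R + Bᵀ * V * B).PosDef := hR.add_posSemidef hBVB
  haveI := hS.isUnit.invertible
  -- the big block matrix is PSD
  have h1 : (fromBlocks R 0 0 0 : Matrix (Fin m ⊕ Fin n) (Fin m ⊕ Fin n) ℝ).PosSemidef := by
    have h := hR.posSemidef.conjTranspose_mul_mul_same
      (fromCols (1 : Matrix (Fin m) (Fin m) ℝ) (0 : Matrix (Fin m) (Fin n) ℝ))
    have e : (fromCols (1 : Matrix (Fin m) (Fin m) ℝ) (0 : Matrix (Fin m) (Fin n) ℝ))ᴴ * R *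
        fromCols (1 : Matrix (Fin m) (Fin m) ℝ) (0 : Matrix (Fin m) (Fin n) ℝ) =
        fromBlocks R 0 0 0 := by
      rw [conjTranspose_eq_transpose_of_trivial, transpose_fromCols, fromRows_mul,
        fromRows_mul_fromCols]
      simp
    exact e ▸ h
  have h2 : (fromBlocks (Bᵀ * V * B) (Bᵀ * V * A) (Aᵀ * V * B) (Aᵀ * V * A)).PosSemidef := by
    have := hV.conjTranspose_mul_mul_same (fromCols B A)
    simpa [conjTranspose_eq_transpose_of_trivial, transpose_fromCols, fromRows_mul,
      mul_fromCols, fromRows_mul_fromCols, Matrix.mul_assoc] using this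
  have hM : (fromBlocks (R + Bᵀ * V * B) (Bᵀ * V * A) (Bᵀ * V * A)ᴴ (Aᵀ * V * A)).PosSemidef := by
    have hVt : Vᵀ = V := by
      rw [← conjTranspose_eq_transpose_of_trivial]; exact hV.isHermitian
    have heq : (Bᵀ * V * A)ᴴ = Aᵀ * V * B := by
      simp [conjTranspose_eq_transpose_of_trivial, transpose_mul, hVt, Matrix.mul_assoc]
    rw [heq]
    have := h1.add h2
    simpa [fromBlocks_add] using this
  have hschur : (Aᵀ * V * A - (Bᵀ * V * A)ᴴ * (R + Bᵀ * V * B)⁻¹ * (Bᵀ * V * A)).PosSemidef :=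
    (PosDef.fromBlocks₁₁ _ _ hS).mp hM
  have hVt : Vᵀ = V := by
    rw [← conjTranspose_eq_transpose_of_trivial]; exact hV.isHermitian
  have heq2 : (Bᵀ * V * A)ᴴ = Aᵀ * V * B := by
    simp [conjTranspose_eq_transpose_of_trivial, transpose_mul, hVt, Matrix.mul_assoc]
  rw [heq2] at hschur
  have := hl.add hschur
  have hfinal : lZZ + (Aᵀ * V * A - Aᵀ * V * B * (R + Bᵀ * V * B)⁻¹ * (Bᵀ * V * A)) =
      lZZ + Aᵀ * V * A - Aᵀ * V * B * (R + Bᵀ * V * B)⁻¹ * Bᵀ * V * A := by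
    simp [add_sub_assoc, Matrix.mul_assoc]
  rw [← hfinal]
  exact this
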